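/- Let i ∈ ℕ and let p be a polynomial on ℝ of degree strictly less than i. For any interval I and any σ ≥ 0, sup_{x ∈ 2^{σ}I} |p(x)| ≤ C · 2^{σ(i-1)} · (|I|^{-1} ∫_I |p|²)^{1/2}, where C depends only on i and 2^{σ}I denotes the interval concentric with I of length 2^{σ}|I|. -/

import Mathlib

open MeasureTheory

private noncomputable def Fi (i : ℕ) (a : EuclideanSpace ℝ (Fin i)) : ℝ :=
  ∑ j : Fin i, ∑ k : Fin i, a j * a k * (∫ t in (-1:ℝ)..1, t ^ ((j : ℕ) + (k : ℕ)))

private lemma Fi_eq (i : ℕ) (a : EuclideanSpace ℝ (Fin i)) :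
    Fi i a = ∫ t in (-1:ℝ)..1, (∑ k : Fin i, a k * t ^ (k : ℕ)) ^ 2 := by
  have h : ∀ t : ℝ, (∑ k : Fin i, a k * t ^ (k : ℕ)) ^ 2
      = ∑ j : Fin i, ∑ k : Fin i, a j * a k * t ^ ((j : ℕ) + (k : ℕ)) := by
    intro t
    rw [sq, Finset.sum_mul_sum]
    refine Finset.sum_congr rfl fun j _ => Finset.sum_congr rfl fun k _ => ?_
    rw [pow_add]; ring
  simp_rw [h]
  rw [intervalIntegral.integral_finset_sum]
  · refine Finset.sum_congr rfl fun j _ => ?_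
    rw [intervalIntegral.integral_finset_sum]
    · exact Finset.sum_congr rfl fun k _ => (intervalIntegral.integral_const_mul _ _).symm
    · intro k _
      exact ((continuous_const.mul (continuous_pow _)).intervalIntegrable _ _)
  · intro j _
    apply Continuous.intervalIntegrable
    continuity

private lemma Fi_smul (i : ℕ) (c : ℝ) (a : EuclideanSpace ℝ (Fin i)) :
    Fi i (c • a) = c ^ 2 * Fi i a := by
  simp only [Fi, Finset.mul_sum, PiLp.smul_apply, smul_eq_mul]
  exact Finset.sum_congr rfl fun j _ => Finset.sum_congr rfl fun k _ => by ring

private lemma Fi_pos (i : ℕ) (a : EuclideanSpace ℝ (Fin i)) (ha : a ≠ 0) : 0 < Fi i a := by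
  classical
  set q : Polynomial ℝ := ∑ k : Fin i, Polynomial.monomial (k : ℕ) (a k) with hq
  have hcoeff : ∀ k : Fin i, q.coeff (k : ℕ) = a k := by
    intro k
    rw [hq, Polynomial.finset_sum_coeff]
    simp only [Polynomial.coeff_monomial]
    rw [Finset.sum_eq_single k]
    · simp
    · intro j _ hjk
      rw [if_neg (fun h => hjk (Fin.ext h))]
    · simp
  have hqne : q ≠ 0 := by
    intro h0
    apply ha
    ext k
    have := hcoeff k
    rw [h0] at this
    simpa using this.symm
  have heval : ∀ t : ℝ, q.eval t = ∑ k : Fin i, a k * t ^ (k : ℕ) := by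
    intro t
    rw [hq, Polynomial.eval_finset_sum]
    simp [Polynomial.eval_monomial]
  rw [Fi_eq]
  have hint : IntervalIntegrable (fun t : ℝ => (∑ k : Fin i, a k * t ^ (k : ℕ)) ^ 2)
      volume (-1) 1 := by
    apply Continuous.intervalIntegrable
    continuity
  rw [intervalIntegral.integral_pos_iff_support_of_nonneg_ae
    (Filter.Eventually.of_forall fun t => sq_nonneg _) hint]
  refine ⟨by norm_num, ?_⟩
  have hroots : Set.Finite {t : ℝ | q.IsRoot t} := Polynomial.finite_setOf_isRoot hqne
  have hsub : Set.Ioc (-1:ℝ) 1 \ {t : ℝ | q.IsRoot t}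
      ⊆ Function.support (fun t : ℝ => (∑ k : Fin i, a k * t ^ (k : ℕ)) ^ 2) ∩ Set.Ioc (-1) 1 := by
    rintro t ⟨ht, hroot⟩
    refine ⟨?_, ht⟩
    simp only [Function.mem_support]
    intro h
    apply hroot
    have : q.eval t = 0 := by
      rw [heval t]; exact pow_eq_zero_iff (n := 2) (by norm_num) |>.mp h
    exact this
  refine lt_of_lt_of_le ?_ (measure_mono hsub)
  rw [measure_diff_null (hroots.measure_zero _)]
  simp [Real.volume_Ioc]

theorem stmt5 (i : ℕ) (hi : 0 < i) :
    ∃ C : ℝ, ∀ p : Polynomial ℝ, p.degree < (i : WithBot ℕ) →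
      ∀ (x₀ ρ : ℝ), 0 < ρ → ∀ σ : ℕ,
      ∀ x ∈ Set.Icc (x₀ - 2 ^ σ * ρ) (x₀ + 2 ^ σ * ρ),
        |p.eval x| ≤ C * 2 ^ ((σ : ℝ) * ((i : ℝ) - 1)) *
          Real.sqrt ((2 * ρ)⁻¹ * ∫ y in Set.Icc (x₀ - ρ) (x₀ + ρ), (p.eval y) ^ 2) := by
  classical
  -- continuity of Fi
  have hFc : Continuous (Fi i) := by
    unfold Fi
    refine continuous_finset_sum _ fun j _ => continuous_finset_sum _ fun k _ => ?_
    exact (((EuclideanSpace.proj j).continuous).mul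
      ((EuclideanSpace.proj k).continuous)).mul continuous_const
  -- min on sphere
  have hw : (EuclideanSpace.single (⟨0, hi⟩ : Fin i) (1:ℝ)) ∈
      Metric.sphere (0 : EuclideanSpace ℝ (Fin i)) 1 := by
    simp [EuclideanSpace.norm_single]
  obtain ⟨a₀, ha₀S, hmin⟩ := (isCompact_sphere (0 : EuclideanSpace ℝ (Fin i)) 1).exists_isMinOn
    ⟨_, hw⟩ hFc.continuousOn
  have ha₀norm : ‖a₀‖ = 1 := mem_sphere_zero_iff_norm.mp ha₀S
  set ε : ℝ := Fi i a₀ with hεdef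
  have hε : 0 < ε := Fi_pos i a₀ (fun h => by simp [h] at ha₀norm)
  -- key coercivity
  have hkey : ∀ a : EuclideanSpace ℝ (Fin i), ε * ‖a‖ ^ 2 ≤ Fi i a := by
    intro a
    rcases eq_or_ne a 0 with rfl | ha
    · have : Fi i ((0:ℝ) • (0 : EuclideanSpace ℝ (Fin i))) = 0 := by
        rw [Fi_smul]; ring
      simpa using this.ge
    · have hna : 0 < ‖a‖ := norm_pos_iff.mpr ha
      have hmem : ‖a‖⁻¹ • a ∈ Metric.sphere (0 : EuclideanSpace ℝ (Fin i)) 1 := by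
        simp [norm_smul, abs_of_pos (inv_pos.mpr hna), inv_mul_cancel₀ hna.ne']
      have h1 : ε ≤ Fi i (‖a‖⁻¹ • a) := hmin hmem
      rw [Fi_smul] at h1
      have h2 : ε * ‖a‖ ^ 2 ≤ (‖a‖⁻¹ ^ 2 * Fi i a) * ‖a‖ ^ 2 := by
        apply mul_le_mul_of_nonneg_right h1 (sq_nonneg _)
      calc ε * ‖a‖ ^ 2 ≤ (‖a‖⁻¹ ^ 2 * Fi i a) * ‖a‖ ^ 2 := h2
        _ = Fi i a := by field_simp
  refine ⟨(i : ℝ) * Real.sqrt (2 / ε), ?_⟩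
  intro p hdeg x₀ ρ hρ σ x hx
  have hnd : p.natDegree < i := by
    rcases eq_or_ne p 0 with rfl | hp
    · simpa using hi
    · exact (Polynomial.natDegree_lt_iff_degree_lt hp).mpr hdeg
  set q : Polynomial ℝ := p.comp (Polynomial.C x₀ + Polynomial.C ρ * Polynomial.X) with hqdef
  have hqe : ∀ t : ℝ, q.eval t = p.eval (x₀ + ρ * t) := by
    intro t
    rw [hqdef, Polynomial.eval_comp]
    simp
  have hqnd : q.natDegree < i := by
    have h1 : (Polynomial.C x₀ + Polynomial.C ρ * Polynomial.X).natDegree ≤ 1 := by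
      refine (Polynomial.natDegree_add_le _ _).trans (max_le (by simp) ?_)
      exact (Polynomial.natDegree_C_mul_le _ _).trans (by simp)
    calc q.natDegree ≤ p.natDegree * (Polynomial.C x₀ + Polynomial.C ρ * Polynomial.X).natDegree :=
          Polynomial.natDegree_comp_le
      _ ≤ p.natDegree * 1 := Nat.mul_le_mul_left _ h1
      _ < i := by simpa using hnd
  set a : EuclideanSpace ℝ (Fin i) := WithLp.toLp 2 (fun k => q.coeff (k : ℕ)) with hadef
  set t : ℝ := (x - x₀) / ρ with htdef
  have hxt : x = x₀ + ρ * t := by rw [htdef]; field_simp; ring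
  have ht : |t| ≤ 2 ^ σ := by
    rw [htdef, abs_div, abs_of_pos hρ, div_le_iff₀ hρ]
    rw [Set.mem_Icc] at hx
    rw [abs_le]; constructor <;> linarith [hx.1, hx.2]
  have hqsum : ∀ s : ℝ, q.eval s = ∑ k : Fin i, a k * s ^ (k : ℕ) := by
    intro s
    rw [Polynomial.eval_eq_sum_range' hqnd, ← Fin.sum_univ_eq_sum_range]
  have hevalx : p.eval x = ∑ k : Fin i, a k * t ^ (k : ℕ) := by
    rw [hxt, ← hqe, hqsum]
  -- integral identity
  have hFia : Fi i a = ρ⁻¹ * ∫ y in Set.Icc (x₀ - ρ) (x₀ + ρ), (p.eval y) ^ 2 := by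
    rw [Fi_eq]
    have h1 : (∫ s in (-1:ℝ)..1, (∑ k : Fin i, a k * s ^ (k : ℕ)) ^ 2)
        = ∫ s in (-1:ℝ)..1, (fun y => (p.eval y) ^ 2) (x₀ + ρ * s) := by
      apply intervalIntegral.integral_congr
      intro s _
      simp only
      rw [← hqsum, hqe]
    rw [h1, intervalIntegral.integral_comp_add_mul (fun y => (p.eval y) ^ 2) hρ.ne' x₀]
    have h2 : x₀ + ρ * (-1) = x₀ - ρ := by ring
    have h3 : x₀ + ρ * 1 = x₀ + ρ := by ring
    rw [h2, h3, smul_eq_mul]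
    congr 1
    rw [intervalIntegral.integral_of_le (by linarith), ← integral_Icc_eq_integral_Ioc]
  have hFnonneg : 0 ≤ Fi i a := le_trans (by positivity) (hkey a)
  -- the average equals Fi i a / 2
  have havg : (2 * ρ)⁻¹ * ∫ y in Set.Icc (x₀ - ρ) (x₀ + ρ), (p.eval y) ^ 2 = Fi i a / 2 := by
    rw [hFia]; ring
  rw [havg]
  -- coefficient bound: |a k| ≤ ‖a‖
  have hcoord : ∀ k : Fin i, |a k| ≤ ‖a‖ := by
    intro k
    rw [EuclideanSpace.norm_eq, ← Real.sqrt_sq_eq_abs]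
    apply Real.sqrt_le_sqrt
    have : (a k) ^ 2 = ‖a k‖ ^ 2 := by rw [Real.norm_eq_abs, sq_abs]
    rw [this]
    exact Finset.single_le_sum (fun j _ => sq_nonneg ‖a j‖) (Finset.mem_univ k)
  -- power bound
  have hpow : ∀ k : Fin i, |t| ^ (k : ℕ) ≤ ((2:ℝ) ^ σ) ^ (i - 1) := by
    intro k
    calc |t| ^ (k : ℕ) ≤ ((2:ℝ) ^ σ) ^ (k : ℕ) :=
          pow_le_pow_left₀ (abs_nonneg t) ht _
      _ ≤ ((2:ℝ) ^ σ) ^ (i - 1) := by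
          apply pow_le_pow_right₀ (one_le_pow₀ (by norm_num : (1:ℝ) ≤ 2))
          omega
  have hsum1 : |p.eval x| ≤ (∑ k : Fin i, |a k|) * ((2:ℝ) ^ σ) ^ (i - 1) := by
    rw [hevalx, Finset.sum_mul]
    refine (Finset.abs_sum_le_sum_abs _ _).trans (Finset.sum_le_sum fun k _ => ?_)
    rw [abs_mul, abs_pow]
    exact mul_le_mul_of_nonneg_left (hpow k) (abs_nonneg _)
  have hsum2 : (∑ k : Fin i, |a k|) ≤ (i : ℝ) * ‖a‖ := by
    have := Finset.sum_le_card_nsmul Finset.univ (fun k : Fin i => |a k|) ‖a‖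
      (fun k _ => hcoord k)
    simpa [nsmul_eq_mul] using this
  have hnorma : ‖a‖ ≤ Real.sqrt (Fi i a / ε) := by
    have h1 : ‖a‖ ^ 2 ≤ Fi i a / ε := by
      rw [le_div_iff₀ hε]; linarith [hkey a]
    calc ‖a‖ = Real.sqrt (‖a‖ ^ 2) := (Real.sqrt_sq (norm_nonneg a)).symm
      _ ≤ Real.sqrt (Fi i a / ε) := Real.sqrt_le_sqrt h1
  have hsqrtsplit : Real.sqrt (Fi i a / ε) = Real.sqrt (2 / ε) * Real.sqrt (Fi i a / 2) := by
    rw [← Real.sqrt_mul (by positivity : (0:ℝ) ≤ 2 / ε)]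
    congr 1
    field_simp
  -- rpow identity
  have hrpow : (2:ℝ) ^ ((σ : ℝ) * ((i : ℝ) - 1)) = ((2:ℝ) ^ σ) ^ (i - 1) := by
    have h1 : (σ : ℝ) * ((i : ℝ) - 1) = ((σ * (i - 1) : ℕ) : ℝ) := by
      push_cast [Nat.cast_sub hi]
      ring
    rw [h1, Real.rpow_natCast, pow_mul]
  rw [hrpow]
  have h2σ : (0:ℝ) ≤ ((2:ℝ) ^ σ) ^ (i - 1) := by positivity
  calc |p.eval x| ≤ (∑ k : Fin i, |a k|) * ((2:ℝ) ^ σ) ^ (i - 1) := hsum1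
    _ ≤ ((i : ℝ) * ‖a‖) * ((2:ℝ) ^ σ) ^ (i - 1) := by
        exact mul_le_mul_of_nonneg_right hsum2 h2σ
    _ ≤ ((i : ℝ) * (Real.sqrt (2 / ε) * Real.sqrt (Fi i a / 2))) * ((2:ℝ) ^ σ) ^ (i - 1) := by
        apply mul_le_mul_of_nonneg_right _ h2σ
        apply mul_le_mul_of_nonneg_left _ (by positivity)
        rw [← hsqrtsplit]
        exact hnorma
    _ = (i : ℝ) * Real.sqrt (2 / ε) * ((2:ℝ) ^ σ) ^ (i - 1) * Real.sqrt (Fi i a / 2) := by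
        ring
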